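/- For every x ∈ A there exist a basis Δ of Φ and an admissible subset Y ⊆ Δ with x ∈ F_Y^Δ. Explicitly, if Δ is a basis with a(x) ≥ 0 for all a ∈ Δ and Y is the maximal admissible subset of {a ∈ Δ : a(x) = 0}, then x ∈ F_Y^Δ. Hence the faces F_Y^Δ decompose A. -/

import Mathlib

/-!
Common setup for Werner, "Compactifications of Bruhat-Tits buildings associated to
linear representations":  a finite-dimensional real vector space `A` (the apartment),
a root system `Φ` in the dual space together with a Weyl-group invariant inner
product, a finite Weyl-invariant set `Λ` of (K-)weights, and for every basis `Δ`
of `Φ` a highest weight `lam0 Δ ∈ Λ`.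
-/

open Pointwise Filter Topology Bornology
open scoped Classical

noncomputable section

/-- A set `M` of linear forms is *connected* if the graph with vertex set `M` and an
edge between `m` and `n` iff `inn m n ≠ 0` is connected. -/
def GraphConnected {D : Type*} (inn : D → D → ℝ) (M : Set D) : Prop :=
  ∀ m ∈ M, ∀ n ∈ M,
    Relation.ReflTransGen (fun x y => x ∈ M ∧ y ∈ M ∧ inn x y ≠ 0) m n

/-- The coefficients of `μ` as a linear combination of the elements of `Δ` (chosen
arbitrarily if one exists; it is unique when `Δ` is linearly independent). -/
noncomputable def coeffs {A : Type*} [AddCommGroup A] [Module ℝ A]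
    (Δ : Finset (Module.Dual ℝ A)) (μ : Module.Dual ℝ A) : Module.Dual ℝ A → ℝ :=
  if h : ∃ n : Module.Dual ℝ A → ℝ, μ = ∑ b ∈ Δ, n b • b then h.choose else fun _ => 0

/-- The support `[μ]` of `μ` with respect to the basis `Δ`: the set of elements of `Δ`
whose coefficient in `μ` is nonzero. -/
noncomputable def supp {A : Type*} [AddCommGroup A] [Module ℝ A]
    (Δ : Finset (Module.Dual ℝ A)) (μ : Module.Dual ℝ A) : Finset (Module.Dual ℝ A) :=
  Δ.filter fun a => coeffs Δ μ a ≠ 0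

/-- Raw data: a finite set `Φ` of roots in the dual of `A`, a product `inn` on the dual,
a finite set `Λ` of weights, and a highest weight `lam0 Δ` for every basis `Δ`. -/
structure RootWeightData (A : Type*) [NormedAddCommGroup A] [NormedSpace ℝ A]
    [FiniteDimensional ℝ A] where
  Φ : Finset (Module.Dual ℝ A)
  inn : Module.Dual ℝ A → Module.Dual ℝ A → ℝ
  Λ : Finset (Module.Dual ℝ A)
  lam0 : Finset (Module.Dual ℝ A) → Module.Dual ℝ A

namespace RootWeightData

variable {A : Type*} [NormedAddCommGroup A] [NormedSpace ℝ A] [FiniteDimensional ℝ A]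
variable (S : RootWeightData A)

/-- The reflection associated to the root `a`. -/
def refl (a : Module.Dual ℝ A) : Function.End (Module.Dual ℝ A) :=
  fun x => x - (2 * S.inn x a / S.inn a a) • a

/-- The Weyl group `W`, generated by the reflections in the roots. -/
def weyl : Submonoid (Function.End (Module.Dual ℝ A)) :=
  Submonoid.closure {f | ∃ a ∈ S.Φ, f = S.refl a}

/-- `Δ` is a basis of the root system `Φ`: a linearly independent subset of `Φ` such
that every root is a nonnegative or nonpositive linear combination of `Δ`. -/
def IsBase (Δ : Finset (Module.Dual ℝ A)) : Prop :=
  (↑Δ : Set (Module.Dual ℝ A)) ⊆ (S.Φ : Set (Module.Dual ℝ A)) ∧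
  LinearIndependent ℝ (fun a : (Δ : Set (Module.Dual ℝ A)) => (a : Module.Dual ℝ A)) ∧
  ∀ a ∈ S.Φ,
    (∃ n : Module.Dual ℝ A → ℝ, (∀ b ∈ Δ, 0 ≤ n b) ∧ a = ∑ b ∈ Δ, n b • b) ∨
    (∃ n : Module.Dual ℝ A → ℝ, (∀ b ∈ Δ, 0 ≤ n b) ∧ a = -∑ b ∈ Δ, n b • b)

/-- `Y` is an admissible subset of the basis `Δ`: `Y ⊆ Δ` and `Y ∪ {λ₀(Δ)}` is
connected. -/
def Admissible (Δ Y : Finset (Module.Dual ℝ A)) : Prop :=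
  Y ⊆ Δ ∧ GraphConnected S.inn ((↑Y : Set (Module.Dual ℝ A)) ∪ {S.lam0 Δ})

end RootWeightData

/-- The whole setting of Werner's paper: the data of `RootWeightData`, where `Φ` is a
(crystallographic, possibly non-reduced) root system spanning the dual of `A`, `inn` is
a Weyl-invariant inner product, `Λ` is a finite Weyl-invariant set of weights, and
`lam0` picks, Weyl-equivariantly, a highest weight for each basis, dominating all of
`Λ`; moreover a subset of a basis is admissible iff it is the support of
`λ₀(Δ) - λ` for some weight `λ`. -/
structure RootWeightSystem (A : Type*) [NormedAddCommGroup A] [NormedSpace ℝ A]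
    [FiniteDimensional ℝ A] extends RootWeightData A where
  inn_symm : ∀ x y, inn x y = inn y x
  inn_add_left : ∀ x y z, inn (x + y) z = inn x z + inn y z
  inn_smul_left : ∀ (c : ℝ) (x y), inn (c • x) y = c * inn x y
  inn_pos : ∀ x, x ≠ 0 → 0 < inn x x
  root_ne_zero : ∀ a ∈ Φ, a ≠ (0 : Module.Dual ℝ A)
  neg_mem : ∀ a ∈ Φ, -a ∈ Φ
  refl_mem : ∀ a ∈ Φ, ∀ b ∈ Φ, toRootWeightData.refl a b ∈ Φ
  inn_weyl_invariant :
    ∀ w ∈ toRootWeightData.weyl, ∀ x y, inn (w x) (w y) = inn x y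
  phi_spans : Submodule.span ℝ (Φ : Set (Module.Dual ℝ A)) = ⊤
  exists_base : ∃ Δ, toRootWeightData.IsBase Δ
  base_cover : ∀ x : A, ∃ Δ, toRootWeightData.IsBase Δ ∧ ∀ a ∈ Δ, 0 ≤ a x
  base_weyl : ∀ w ∈ toRootWeightData.weyl, ∀ Δ, toRootWeightData.IsBase Δ →
    toRootWeightData.IsBase (Δ.image (w : Module.Dual ℝ A → Module.Dual ℝ A))
  lam0_mem : ∀ Δ, toRootWeightData.IsBase Δ → lam0 Δ ∈ Λ
  lam0_dominates : ∀ Δ, toRootWeightData.IsBase Δ → ∀ l ∈ Λ,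
    ∃ n : Module.Dual ℝ A → ℝ, (∀ a ∈ Δ, 0 ≤ n a) ∧ lam0 Δ - l = ∑ a ∈ Δ, n a • a
  weight_weyl_invariant : ∀ w ∈ toRootWeightData.weyl, ∀ l ∈ Λ, w l ∈ Λ
  lam0_equivariant : ∀ w ∈ toRootWeightData.weyl, ∀ Δ, toRootWeightData.IsBase Δ →
    lam0 (Δ.image (w : Module.Dual ℝ A → Module.Dual ℝ A)) = w (lam0 Δ)
  integrality : ∀ l ∈ Λ, ∀ a ∈ Φ, ∃ k : ℤ, 2 * inn l a / inn a a = (k : ℝ)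
  admissible_iff_support : ∀ Δ, toRootWeightData.IsBase Δ → ∀ Y ⊆ Δ,
    (toRootWeightData.Admissible Δ Y ↔ ∃ l ∈ Λ, supp Δ (lam0 Δ - l) = Y)

namespace RootWeightSystem

variable {A : Type*} [NormedAddCommGroup A] [NormedSpace ℝ A] [FiniteDimensional ℝ A]
variable (S : RootWeightSystem A)

/-- The face `F_Y^Δ` of the apartment `A` associated to a basis `Δ` and an admissible
subset `Y ⊆ Δ`. -/
def Face (Δ Y : Finset (Module.Dual ℝ A)) : Set A :=
  {x | (∀ a ∈ Y, a x = 0) ∧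
    ∀ l ∈ S.Λ, ¬ supp Δ (S.lam0 Δ - l) ⊆ Y → 0 < (S.lam0 Δ - l) x}

/-- `F` belongs to the collection `Σ` of faces. -/
def IsFace (F : Set A) : Prop :=
  ∃ Δ Y, S.toRootWeightData.IsBase Δ ∧ S.toRootWeightData.Admissible Δ Y ∧
    F = S.Face Δ Y

/-- The collection `Σ` of all faces. -/
def Faces : Type _ := {F : Set A // S.IsFace F}

/-- The relation identifying `(F, u)` and `(F, v)` when `u - v ∈ ⟨F⟩`; the quotient is
the disjoint union `Ā = ⊔_{F ∈ Σ} A/⟨F⟩`. -/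
def AbarRel (p q : S.Faces × A) : Prop :=
  p.1 = q.1 ∧ p.2 - q.2 ∈ Submodule.span ℝ p.1.val

/-- The compactified apartment `Ā = ⊔_{F ∈ Σ} A_F`, `A_F = A/⟨F⟩`. -/
def Abar : Type _ := Quot S.AbarRel

/-- `r_F(u)`, the image of `u ∈ A` in the stratum `A_F` of `Ā`. -/
def mkAbar (F : S.Faces) (u : A) : S.Abar := Quot.mk _ (F, u)

/-- The basic set `Γ_F(U) = ⋃_{F' ⊆ cl F} r_{F'}(U + F)` of `Ā`. -/
def Gamma (F : S.Faces) (U : Set A) : Set S.Abar :=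
  {p | ∃ F' : S.Faces, F'.val ⊆ closure F.val ∧ ∃ u ∈ U + F.val, p = S.mkAbar F' u}

/-- The topology of `Ā`, generated by the sets `Γ_F(U)` for `F ∈ Σ` and `U ⊆ A`
bounded and open. -/
instance : TopologicalSpace S.Abar :=
  TopologicalSpace.generateFrom
    {V : Set S.Abar | ∃ (F : S.Faces) (U : Set A),
      IsOpen U ∧ IsBounded U ∧ V = S.Gamma F U}

/-- `f_Ω(a) = inf {t : Ω ⊆ cl_Ā {z ∈ A : a(z) ≥ -t}} ∈ ℝ ∪ {±∞}`, where `A` is embedded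
in `Ā` as the stratum of the face `F₀ = {0}`. -/
def fOmega (F₀ : S.Faces) (Ω : Set S.Abar) (a : Module.Dual ℝ A) : EReal :=
  sInf ((fun t : ℝ => (t : EReal)) ''
    {t : ℝ | Ω ⊆ closure (S.mkAbar F₀ '' {z : A | -t ≤ a z})})

end RootWeightSystem


variable {A : Type*} [NormedAddCommGroup A] [NormedSpace ℝ A] [FiniteDimensional ℝ A]

lemma coeffs_eq_aux {Δ : Finset (Module.Dual ℝ A)}
    (hind : LinearIndependent ℝ
      (fun a : (Δ : Set (Module.Dual ℝ A)) => (a : Module.Dual ℝ A)))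
    {μ : Module.Dual ℝ A} {n : Module.Dual ℝ A → ℝ}
    (hrep : μ = ∑ b ∈ Δ, n b • b) :
    ∀ a ∈ Δ, coeffs Δ μ a = n a := by
  intro a ha
  have hex : ∃ m : Module.Dual ℝ A → ℝ, μ = ∑ b ∈ Δ, m b • b := ⟨n, hrep⟩
  have hc : μ = ∑ b ∈ Δ, hex.choose b • b := hex.choose_spec
  rw [coeffs, dif_pos hex]
  have hsum : ∑ b ∈ Δ, (hex.choose b - n b) • b = 0 := by
    have h0 : (∑ b ∈ Δ, hex.choose b • b) - (∑ b ∈ Δ, n b • b) = 0 := by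
      rw [← hc, ← hrep, sub_self]
    calc ∑ b ∈ Δ, (hex.choose b - n b) • b
        = (∑ b ∈ Δ, hex.choose b • b) - (∑ b ∈ Δ, n b • b) := by
          rw [← Finset.sum_sub_distrib]
          exact Finset.sum_congr rfl (fun b _ => by module)
      _ = 0 := h0
  have hkey := Fintype.linearIndependent_iff.mp hind
    (fun b : (Δ : Set (Module.Dual ℝ A)) => hex.choose (b : Module.Dual ℝ A) - n b) ?_
  · have h := hkey ⟨a, ha⟩
    simpa [sub_eq_zero] using h
  · rw [← hsum]
    exact Finset.sum_coe_sort Δ (fun b => (hex.choose b - n b) • b)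

lemma admissible_empty (S : RootWeightData A) (Δ : Finset (Module.Dual ℝ A)) :
    S.Admissible Δ ∅ := by
  refine ⟨Finset.empty_subset _, ?_⟩
  intro m hm n hn
  simp only [Finset.coe_empty, Set.empty_union, Set.mem_singleton_iff] at hm hn
  rw [hm, hn]

lemma admissible_union (S : RootWeightData A) {Δ Y Y' : Finset (Module.Dual ℝ A)}
    (h : S.Admissible Δ Y) (h' : S.Admissible Δ Y') : S.Admissible Δ (Y ∪ Y') := by
  refine ⟨Finset.union_subset h.1 h'.1, ?_⟩
  set M : Set (Module.Dual ℝ A) := (↑(Y ∪ Y') : Set (Module.Dual ℝ A)) ∪ {S.lam0 Δ}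
  have hsub : ((↑Y : Set (Module.Dual ℝ A)) ∪ {S.lam0 Δ}) ⊆ M := by
    intro z hz
    rcases hz with hz | hz
    · exact Or.inl (by simpa using Or.inl (by exact_mod_cast hz))
    · exact Or.inr hz
  have hsub' : ((↑Y' : Set (Module.Dual ℝ A)) ∪ {S.lam0 Δ}) ⊆ M := by
    intro z hz
    rcases hz with hz | hz
    · exact Or.inl (by simpa using Or.inr (by exact_mod_cast hz))
    · exact Or.inr hz
  have mono : ∀ (N : Set (Module.Dual ℝ A)), N ⊆ M → ∀ {p q},
      Relation.ReflTransGen (fun x y => x ∈ N ∧ y ∈ N ∧ S.inn x y ≠ 0) p q →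
      Relation.ReflTransGen (fun x y => x ∈ M ∧ y ∈ M ∧ S.inn x y ≠ 0) p q := by
    intro N hN p q hpq
    exact Relation.ReflTransGen.mono (p := fun x y => x ∈ M ∧ y ∈ M ∧ S.inn x y ≠ 0) (fun x y hxy => ⟨hN hxy.1, hN hxy.2.1, hxy.2.2⟩) p q hpq
  have toLam : ∀ m ∈ M, Relation.ReflTransGen
      (fun x y => x ∈ M ∧ y ∈ M ∧ S.inn x y ≠ 0) m (S.lam0 Δ) := by
    intro m hm
    rcases hm with hm | hm
    · rcases Finset.mem_union.mp (by exact_mod_cast hm) with hmY | hmY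
      · exact mono _ hsub (h.2 m (Or.inl (by exact_mod_cast hmY)) (S.lam0 Δ) (Or.inr rfl))
      · exact mono _ hsub' (h'.2 m (Or.inl (by exact_mod_cast hmY)) (S.lam0 Δ) (Or.inr rfl))
    · rw [hm]
  have fromLam : ∀ n ∈ M, Relation.ReflTransGen
      (fun x y => x ∈ M ∧ y ∈ M ∧ S.inn x y ≠ 0) (S.lam0 Δ) n := by
    intro m hm
    rcases hm with hm | hm
    · rcases Finset.mem_union.mp (by exact_mod_cast hm) with hmY | hmY
      · exact mono _ hsub (h.2 (S.lam0 Δ) (Or.inr rfl) m (Or.inl (by exact_mod_cast hmY)))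
      · exact mono _ hsub' (h'.2 (S.lam0 Δ) (Or.inr rfl) m (Or.inl (by exact_mod_cast hmY)))
    · rw [hm]
  intro m hm n hn
  exact (toLam m hm).trans (fromLam n hn)

/-- Every `x ∈ A` lies in some face `F_Y^Δ`; explicitly, if `Δ` is a
basis with `a(x) ≥ 0` for all `a ∈ Δ` and `Y` is the maximal admissible subset of
`{a ∈ Δ : a(x) = 0}`, then `x ∈ F_Y^Δ`.  Hence the faces `F_Y^Δ` decompose `A`. -/
theorem mem_face_of_maximal_admissible (S : RootWeightSystem A) :
    (∀ x : A, ∃ Δ Y : Finset (Module.Dual ℝ A),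
      S.toRootWeightData.IsBase Δ ∧ S.toRootWeightData.Admissible Δ Y ∧
        x ∈ S.Face Δ Y) ∧
    ∀ (x : A) (Δ Y : Finset (Module.Dual ℝ A)), S.toRootWeightData.IsBase Δ →
      (∀ a ∈ Δ, 0 ≤ a x) →
      S.toRootWeightData.Admissible Δ Y → (∀ a ∈ Y, a x = 0) →
      (∀ Y' : Finset (Module.Dual ℝ A), S.toRootWeightData.Admissible Δ Y' →
        (∀ a ∈ Y', a x = 0) → Y' ⊆ Y) →
      x ∈ S.Face Δ Y := by
  have part2 : ∀ (x : A) (Δ Y : Finset (Module.Dual ℝ A)), S.toRootWeightData.IsBase Δ →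
      (∀ a ∈ Δ, 0 ≤ a x) →
      S.toRootWeightData.Admissible Δ Y → (∀ a ∈ Y, a x = 0) →
      (∀ Y' : Finset (Module.Dual ℝ A), S.toRootWeightData.Admissible Δ Y' →
        (∀ a ∈ Y', a x = 0) → Y' ⊆ Y) →
      x ∈ S.Face Δ Y := by
    intro x Δ Y hΔ hpos hYadm hYzero hmax
    refine ⟨hYzero, ?_⟩
    intro l hl hns
    obtain ⟨n, hn0, hrep⟩ := S.lam0_dominates Δ hΔ l hl
    have hco := coeffs_eq_aux hΔ.2.1 hrep
    have hval : (S.lam0 Δ - l) x = ∑ b ∈ Δ, n b * b x := by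
      rw [hrep]
      simp [LinearMap.sum_apply, LinearMap.smul_apply, smul_eq_mul]
    have hterm : ∀ b ∈ Δ, 0 ≤ n b * b x :=
      fun b hb => mul_nonneg (hn0 b hb) (hpos b hb)
    have hnneg : 0 ≤ (S.lam0 Δ - l) x := by
      rw [hval]; exact Finset.sum_nonneg hterm
    by_contra hc
    have heq : (S.lam0 Δ - l) x = 0 := le_antisymm (not_lt.mp hc) hnneg
    have hall : ∀ b ∈ Δ, n b * b x = 0 := by
      have := (Finset.sum_eq_zero_iff_of_nonneg hterm).mp (by rw [← hval]; exact heq)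
      exact this
    have hsuppzero : ∀ a ∈ supp Δ (S.lam0 Δ - l), a x = 0 := by
      intro a ha
      obtain ⟨haΔ, hane⟩ := Finset.mem_filter.mp ha
      have hna : n a ≠ 0 := by rw [← hco a haΔ]; exact hane
      have := hall a haΔ
      exact (mul_eq_zero.mp this).resolve_left hna
    have hsuppsub : supp Δ (S.lam0 Δ - l) ⊆ Δ := Finset.filter_subset _ _
    have hadm : S.toRootWeightData.Admissible Δ (supp Δ (S.lam0 Δ - l)) :=
      (S.admissible_iff_support Δ hΔ _ hsuppsub).mpr ⟨l, hl, rfl⟩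
    exact hns (hmax _ hadm hsuppzero)
  refine ⟨?_, part2⟩
  intro x
  obtain ⟨Δ, hΔ, hpos⟩ := S.base_cover x
  set Z : Finset (Module.Dual ℝ A) := Δ.filter (fun a => a x = 0) with hZ
  set 𝒜 : Finset (Finset (Module.Dual ℝ A)) :=
    Z.powerset.filter (fun Y => S.toRootWeightData.Admissible Δ Y) with h𝒜
  set Y : Finset (Module.Dual ℝ A) := 𝒜.sup id with hYdef
  have hYadm : S.toRootWeightData.Admissible Δ Y := by
    refine Finset.sup_induction (admissible_empty _ _) ?_ ?_
    · intro a ha b hb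
      exact admissible_union _ ha hb
    · intro i hi
      exact (Finset.mem_filter.mp hi).2
  have hYsubZ : Y ≤ Z := by
    refine Finset.sup_le ?_
    intro Y' hY'
    exact (Finset.mem_powerset.mp (Finset.mem_filter.mp hY').1)
  have hYzero : ∀ a ∈ Y, a x = 0 := by
    intro a ha
    exact (Finset.mem_filter.mp (hYsubZ ha)).2
  have hmax : ∀ Y' : Finset (Module.Dual ℝ A), S.toRootWeightData.Admissible Δ Y' →
      (∀ a ∈ Y', a x = 0) → Y' ⊆ Y := by
    intro Y' hY'adm hY'zero
    have hY'Z : Y' ⊆ Z := by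
      intro a ha
      exact Finset.mem_filter.mpr ⟨hY'adm.1 ha, hY'zero a ha⟩
    have : Y' ∈ 𝒜 := Finset.mem_filter.mpr ⟨Finset.mem_powerset.mpr hY'Z, hY'adm⟩
    exact Finset.le_sup (f := id) this
  exact ⟨Δ, Y, hΔ, hYadm, part2 x Δ Y hΔ hpos hYadm hYzero hmax⟩
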